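/- arXiv:2210.00601 — 2 statements merged into one kernel-verified Lean document; each statement's English description precedes it below -/
import Mathlib

section
/- Suppose there exists (s,t,u,v) ∈ C(P,Q) with s² + t² > 1. Then there exist an angle α, scaling ρ > 1, and translation (u,v) such that the copy of P rotated by α, scaled by ρ, and translated by (u,v) is contained in Q; scaling this placement down by 1/ρ yields a congruent copy of P contained in the interior of Q (assuming Q contains the origin in its interior and the original inequalities are strict after the downscaling). -/
/-- If some `(s,t,u,v) ∈ C(P,Q)` has `s² + t² > 1`, then `P` rotated by some `α`,
scaled by some `ρ > 1` and translated fits in `Q`, and scaling that placement down by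
`1/ρ` puts a congruent copy of `P` in the interior of `Q`. -/
theorem stmt_14 (m n : ℕ) (x y : Fin m → ℝ) (a b : Fin n → ℝ)
    (Q : Set (ℝ × ℝ)) (hQ : Q = {q : ℝ × ℝ | ∀ j : Fin n, a j * q.1 + b j * q.2 ≤ 1})
    (h0 : (0, 0) ∈ interior Q)
    (h : ∃ s t u v : ℝ,
      (∀ (i : Fin m) (j : Fin n),
        (a j * x i + b j * y i) * s + (b j * x i - a j * y i) * t +
          a j * u + b j * v ≤ 1) ∧ 1 < s ^ 2 + t ^ 2) :
    ∃ (α ρ u v : ℝ), 1 < ρ ∧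
      (∀ i : Fin m,
        (x i * (ρ * Real.cos α) - y i * (ρ * Real.sin α) + u,
         x i * (ρ * Real.sin α) + y i * (ρ * Real.cos α) + v) ∈ Q) ∧
      (∀ i : Fin m,
        (x i * Real.cos α - y i * Real.sin α + u / ρ,
         x i * Real.sin α + y i * Real.cos α + v / ρ) ∈ interior Q) := by
  obtain ⟨s, t, u, v, hst, hbig⟩ := h
  have hconv : Convex ℝ Q := by
    subst hQ
    intro p hp q hq c d hc hd hcd
    intro j
    have hpj := hp j
    have hqj := hq j
    simp only [Prod.fst_add, Prod.snd_add, Prod.smul_fst, Prod.smul_snd, smul_eq_mul]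
    nlinarith
  set ρ : ℝ := Real.sqrt (s ^ 2 + t ^ 2) with hρ
  have hρ1 : 1 < ρ := by
    rw [hρ, show (1:ℝ) = Real.sqrt 1 by simp]
    exact Real.sqrt_lt_sqrt (by norm_num) hbig
  have hρ0 : 0 < ρ := lt_trans one_pos hρ1
  set z : ℂ := ⟨s, t⟩ with hz
  have habs : ‖z‖ = ρ := by
    rw [Complex.norm_def, Complex.normSq_apply, hρ]
    norm_num [hz]
    ring_nf
  have hz0 : z ≠ 0 := by
    intro hc
    rw [hc] at habs
    simp at habs
    linarith [habs, hρ0]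
  set α : ℝ := Complex.arg z with hα
  have hcos : ρ * Real.cos α = s := by
    rw [hα, Complex.cos_arg hz0, habs]
    field_simp
    rfl
  have hsin : ρ * Real.sin α = t := by
    rw [hα, Complex.sin_arg, habs]
    field_simp
    rfl
  refine ⟨α, ρ, u, v, hρ1, ?_, ?_⟩
  · intro i
    rw [hQ]
    intro j
    have := hst i j
    simp only [hcos, hsin]
    nlinarith [hst i j]
  · intro i
    have hmem : (x i * (ρ * Real.cos α) - y i * (ρ * Real.sin α) + u,
         x i * (ρ * Real.sin α) + y i * (ρ * Real.cos α) + v) ∈ Q := by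
      rw [hQ]
      intro j
      simp only [hcos, hsin]
      nlinarith [hst i j]
    have hkey := hconv.combo_interior_self_mem_interior h0 hmem
      (a := 1 - 1/ρ) (b := 1/ρ) (by rw [sub_pos]; rw [div_lt_one hρ0]; exact hρ1)
      (by positivity) (by ring)
    convert hkey using 2 <;>
      simp only [Prod.smul_fst, Prod.smul_snd, Prod.fst_add, Prod.snd_add, smul_eq_mul] <;>
      field_simp <;> ring
end

section
/- The unit cube in ℝ³ has the Rupert property: there exist angles θ_p, φ_p, θ_q, φ_q, a rotation angle α, and a translation (u,v) such that (T_{u,v} ∘ R_α ∘ M_{θ_p,φ_p})(C) is contained in the interior of the convex hull of M_{θ_q,φ_q}(C), where C is the set of 8 vertices of the unit cube. -/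
/-- The 2×3 projection matrix `M θ φ`. -/
noncomputable def M (θ φ : ℝ) : Matrix (Fin 2) (Fin 3) ℝ :=
  !![-Real.sin θ, Real.cos θ, 0;
     -Real.cos θ * Real.cos φ, -Real.sin θ * Real.cos φ, Real.sin φ]

/-- The planar rotation matrix `R α`. -/
noncomputable def R (α : ℝ) : Matrix (Fin 2) (Fin 2) ℝ :=
  !![Real.cos α, -Real.sin α; Real.sin α, Real.cos α]

/-- `T_{u,v} ∘ R_α ∘ M_{θ,φ} : ℝ³ → ℝ²`. -/
noncomputable def transform (θ φ α u v : ℝ) (x : Fin 3 → ℝ) : Fin 2 → ℝ :=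
  (R α).mulVec ((M θ φ).mulVec x) + ![u, v]

/-- The set of the 8 vertices of the unit cube. -/
def cube : Set (Fin 3 → ℝ) := {p | ∀ i, p i = 0 ∨ p i = 1}

open Real

/-- Convex combination of three points of a convex set. -/
lemma combo3 {s : Set (Fin 2 → ℝ)} (hs : Convex ℝ s) {A B C x : Fin 2 → ℝ}
    (hA : A ∈ s) (hB : B ∈ s) (hC : C ∈ s) {a b c : ℝ}
    (ha : 0 ≤ a) (hb : 0 ≤ b) (hc : 0 ≤ c) (habc : a + b + c = 1)
    (hx : x = a • A + b • B + c • C) : x ∈ s := by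
  have := hs.sum_mem (t := (Finset.univ : Finset (Fin 3))) (w := ![a, b, c]) (z := ![A, B, C])
    (by intro i _; fin_cases i <;> assumption)
    (by simp [Fin.sum_univ_three]; linarith)
    (by intro i _; fin_cases i <;> assumption)
  rwa [Fin.sum_univ_three, hx] at *

/-- Convex combination of four points of a convex set. -/
lemma combo4 {s : Set (Fin 2 → ℝ)} (hs : Convex ℝ s) {A B C D x : Fin 2 → ℝ}
    (hA : A ∈ s) (hB : B ∈ s) (hC : C ∈ s) (hD : D ∈ s) {a b c d : ℝ}
    (ha : 0 ≤ a) (hb : 0 ≤ b) (hc : 0 ≤ c) (hd : 0 ≤ d) (habcd : a + b + c + d = 1)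
    (hx : x = a • A + b • B + c • C + d • D) : x ∈ s := by
  have := hs.sum_mem (t := (Finset.univ : Finset (Fin 4))) (w := ![a, b, c, d])
    (z := ![A, B, C, D])
    (by intro i _; fin_cases i <;> assumption)
    (by simp [Fin.sum_univ_four]; linarith)
    (by intro i _; fin_cases i <;> assumption)
  rwa [Fin.sum_univ_four, hx] at *

/-- The unit cube is Rupert. -/
theorem stmt_17 :
    ∃ θp φp θq φq α u v : ℝ,
      transform θp φp α u v '' cube ⊆
        interior (convexHull ℝ ((M θq φq).mulVec '' cube)) := by
  refine ⟨0, 0, arcsin (3/5), arcsin (12/13), 0, -47/100, 67/100, ?_⟩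
  -- The projection matrix is rational.
  have hM : M (arcsin (3/5)) (arcsin (12/13)) = !![(-3/5 : ℝ), 4/5, 0; -4/13, -3/13, 12/13] := by
    have h1 : sin (arcsin (3/5)) = 3/5 := sin_arcsin (by norm_num) (by norm_num)
    have h2 : cos (arcsin (3/5:ℝ)) = 4/5 := by
      rw [cos_arcsin, show (1 - (3/5:ℝ)^2) = (4/5)^2 by norm_num, Real.sqrt_sq (by norm_num)]
    have h3 : sin (arcsin (12/13)) = 12/13 := sin_arcsin (by norm_num) (by norm_num)
    have h4 : cos (arcsin (12/13:ℝ)) = 5/13 := by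
      rw [cos_arcsin, show (1 - (12/13:ℝ)^2) = (5/13)^2 by norm_num, Real.sqrt_sq (by norm_num)]
    rw [M, h1, h2, h3, h4]; norm_num
  set Q : Set (Fin 2 → ℝ) := (M (arcsin (3/5)) (arcsin (12/13))).mulVec '' cube with hQ
  have hconv : Convex ℝ (convexHull ℝ Q) := convex_convexHull ℝ Q
  -- six shadow vertices
  have hmem : ∀ x y z : ℝ, (x = 0 ∨ x = 1) → (y = 0 ∨ y = 1) → (z = 0 ∨ z = 1) →
      (![(-3*x + 4*y)/5, (-4*x - 3*y + 12*z)/13] : Fin 2 → ℝ) ∈ convexHull ℝ Q := by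
    intro x y z hx hy hz
    apply subset_convexHull
    refine ⟨![x, y, z], ?_, ?_⟩
    · intro i; fin_cases i <;> assumption
    · rw [hM]; funext i
      fin_cases i <;>
        simp [Matrix.mulVec, dotProduct, Fin.sum_univ_three] <;> ring
  have H0 : (![(-3/5 : ℝ), -4/13] : Fin 2 → ℝ) ∈ convexHull ℝ Q := by
    have := hmem 1 0 0 (Or.inr rfl) (Or.inl rfl) (Or.inl rfl); convert this using 2 <;> norm_num
  have H1 : (![(1/5 : ℝ), -7/13] : Fin 2 → ℝ) ∈ convexHull ℝ Q := by
    have := hmem 1 1 0 (Or.inr rfl) (Or.inr rfl) (Or.inl rfl); convert this using 2 <;> norm_num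
  have H2 : (![(4/5 : ℝ), -3/13] : Fin 2 → ℝ) ∈ convexHull ℝ Q := by
    have := hmem 0 1 0 (Or.inl rfl) (Or.inr rfl) (Or.inl rfl); convert this using 2 <;> norm_num
  have H3 : (![(4/5 : ℝ), 9/13] : Fin 2 → ℝ) ∈ convexHull ℝ Q := by
    have := hmem 0 1 1 (Or.inl rfl) (Or.inr rfl) (Or.inr rfl); convert this using 2 <;> norm_num
  have H4 : (![(0 : ℝ), 12/13] : Fin 2 → ℝ) ∈ convexHull ℝ Q := by
    have := hmem 0 0 1 (Or.inl rfl) (Or.inl rfl) (Or.inr rfl); convert this using 2 <;> norm_num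
  have H5 : (![(-3/5 : ℝ), 8/13] : Fin 2 → ℝ) ∈ convexHull ℝ Q := by
    have := hmem 1 0 1 (Or.inr rfl) (Or.inl rfl) (Or.inr rfl); convert this using 2 <;> norm_num
  -- four corners of the rectangle [-12/25, 27/50] × [-22/65, 44/65]
  have C00 : (![(-12/25 : ℝ), -22/65] : Fin 2 → ℝ) ∈ convexHull ℝ Q := by
    refine combo3 hconv H0 H1 H2 (a := 107/125) (b := 17/125) (c := 1/125)
      (by norm_num) (by norm_num) (by norm_num) (by norm_num) ?_
    funext i; fin_cases i <;> norm_num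
  have C10 : (![(27/50 : ℝ), -22/65] : Fin 2 → ℝ) ∈ convexHull ℝ Q := by
    refine combo3 hconv H0 H1 H2 (a := 1/25) (b := 17/50) (c := 31/50)
      (by norm_num) (by norm_num) (by norm_num) (by norm_num) ?_
    funext i; fin_cases i <;> norm_num
  have C01 : (![(-12/25 : ℝ), 44/65] : Fin 2 → ℝ) ∈ convexHull ℝ Q := by
    refine combo3 hconv H4 H5 H0 (a := 1/5) (b := 4/5) (c := 0)
      (by norm_num) (by norm_num) (by norm_num) (by norm_num) ?_
    funext i; fin_cases i <;> norm_num
  have C11 : (![(27/50 : ℝ), 44/65] : Fin 2 → ℝ) ∈ convexHull ℝ Q := by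
    refine combo3 hconv H0 H3 H4 (a := 47/730) (b := 264/365) (c := 31/146)
      (by norm_num) (by norm_num) (by norm_num) (by norm_num) ?_
    funext i; fin_cases i <;> norm_num
  -- the open rectangle
  set U : Set (Fin 2 → ℝ) :=
    {p | p 0 ∈ Set.Ioo (-12/25 : ℝ) (27/50) ∧ p 1 ∈ Set.Ioo (-22/65 : ℝ) (44/65)} with hU
  have hUopen : IsOpen U := by
    have : U = (fun p : Fin 2 → ℝ => p 0) ⁻¹' Set.Ioo (-12/25 : ℝ) (27/50) ∩
        (fun p : Fin 2 → ℝ => p 1) ⁻¹' Set.Ioo (-22/65 : ℝ) (44/65) := rfl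
    rw [this]
    exact (isOpen_Ioo.preimage (continuous_apply 0)).inter
      (isOpen_Ioo.preimage (continuous_apply 1))
  have hUsub : U ⊆ convexHull ℝ Q := by
    rintro p ⟨⟨h0l, h0r⟩, ⟨h1l, h1r⟩⟩
    set s : ℝ := (p 0 + 12/25) / (51/50) with hs
    set t : ℝ := (p 1 + 22/65) / (66/65) with ht
    have hs0 : 0 ≤ s := by rw [hs]; apply div_nonneg <;> linarith
    have hs1 : s ≤ 1 := by rw [hs, div_le_one (by norm_num)]; linarith
    have ht0 : 0 ≤ t := by rw [ht]; apply div_nonneg <;> linarith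
    have ht1 : t ≤ 1 := by rw [ht, div_le_one (by norm_num)]; linarith
    refine combo4 hconv C00 C10 C01 C11
      (a := (1-s)*(1-t)) (b := s*(1-t)) (c := (1-s)*t) (d := s*t)
      (by nlinarith) (by nlinarith) (by nlinarith) (by nlinarith) (by ring) ?_
    have hp0 : p 0 = -12/25 + s * (51/50) := by rw [hs]; field_simp; ring
    have hp1 : p 1 = -22/65 + t * (66/65) := by rw [ht]; field_simp; ring
    funext i
    fin_cases i
    · show p 0 = _
      simp only [Fin.mk_zero, Fin.mk_one, Pi.add_apply, Pi.smul_apply, Matrix.cons_val_zero,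
        Matrix.cons_val_one, Matrix.head_cons, smul_eq_mul]
      rw [hp0]; ring
    · show p 1 = _
      simp only [Fin.mk_zero, Fin.mk_one, Pi.add_apply, Pi.smul_apply, Matrix.cons_val_zero,
        Matrix.cons_val_one, Matrix.head_cons, smul_eq_mul]
      rw [hp1]; ring
  have hUint : U ⊆ interior (convexHull ℝ Q) := interior_maximal hUsub hUopen
  rintro q ⟨x, hx, rfl⟩
  apply hUint
  have hT : transform 0 0 0 (-47/100) (67/100) x = ![x 1 - 47/100, -(x 0) + 67/100] := by
    funext i
    fin_cases i <;>
      simp [transform, M, R, Matrix.mulVec, dotProduct,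
        Fin.sum_univ_three, Fin.sum_univ_two] <;> ring
  rw [hT]
  constructor
  · rcases hx 1 with h | h <;> simp [h] <;> norm_num
  · rcases hx 0 with h | h <;> simp [h] <;> norm_num
end
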